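/- Let σ = ReLU, d ∈ ℕ, and h ∈ ℕ with h ≥ 3, and set m = (1,1,1,h−3). Every function in the class tilde-G_{d,σ,h}(ℝ^d,ℝ), i.e. every function of the form vᵀ ∘ Φ_L ∘ A_{L−1} ∘ ⋯ ∘ Φ₂ ∘ A₁ ∘ Φ₁ ∘ Q with Q ∈ R_{d,m}, A₁,…,A_{L−1} ∈ L_m, Φ₁,…,Φ_L ∈ Ẽ_{h−3,σ}, v ∈ ℝ^h with ‖v‖₁ ≤ 1, and L ∈ ℕ, is 1-Lipschitz from (ℝ^d, ‖·‖₂) to ℝ. -/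

import Mathlib

open scoped BigOperators

noncomputable section

def relu (t : ℝ) : ℝ := max t 0

def entrywise {n : ℕ} (σ : ℝ → ℝ) (x : EuclideanSpace ℝ (Fin n)) : EuclideanSpace ℝ (Fin n) :=
  WithLp.toLp 2 (fun i => σ (x i))

def matVec {k h : ℕ} (W : Matrix (Fin k) (Fin h) ℝ) (x : EuclideanSpace ℝ (Fin h)) :
    EuclideanSpace ℝ (Fin k) :=
  Matrix.toEuclideanLin W x

/-- Spectral norm of a real matrix, as the operator norm between Euclidean spaces. -/
def specNorm {k h : ℕ} (W : Matrix (Fin k) (Fin h) ℝ) : ℝ :=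
  ‖LinearMap.toContinuousLinearMap (Matrix.toEuclideanLin W)‖

/-- Membership in `E_{h,σ}` with `σ = ReLU`. -/
def IsEulerStep {h : ℕ} (Φ : EuclideanSpace ℝ (Fin h) → EuclideanSpace ℝ (Fin h)) : Prop :=
  ∃ (k : ℕ) (W : Matrix (Fin k) (Fin h) ℝ) (b : EuclideanSpace ℝ (Fin k)) (τ : ℝ),
    0 ≤ τ ∧ τ ≤ 2 ∧ specNorm W ≤ 1 ∧
    ∀ x, Φ x = x - τ • matVec W.transpose (entrywise relu (matVec W x + b))

def compChain {α : Type*} : (L : ℕ) → (Fin L → α → α) → α → α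
  | 0, _, x => x
  | L + 1, Φ, x => Φ (Fin.last L) (compChain L (fun i => Φ i.castSucc) x)

/-- Membership in `G_{d,σ}(X,ℝ)` with `σ = ReLU`. -/
def InG {d : ℕ} (X : Set (EuclideanSpace ℝ (Fin d))) (g : EuclideanSpace ℝ (Fin d) → ℝ) : Prop :=
  LipschitzOnWith 1 g X ∧
  ∃ (h L : ℕ) (Qhat : Matrix (Fin h) (Fin d) ℝ) (qhat : EuclideanSpace ℝ (Fin h))
    (Φ : Fin L → (EuclideanSpace ℝ (Fin h) → EuclideanSpace ℝ (Fin h)))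
    (v : EuclideanSpace ℝ (Fin h)),
    (∀ ℓ, IsEulerStep (Φ ℓ)) ∧ ‖v‖ = 1 ∧
    ∀ x ∈ X, g x = ∑ i, v i * compChain L Φ (matVec Qhat x + qhat) i

def concatE {h₁ h₂ : ℕ} (u : EuclideanSpace ℝ (Fin h₁)) (v : EuclideanSpace ℝ (Fin h₂)) :
    EuclideanSpace ℝ (Fin (h₁ + h₂)) :=
  WithLp.toLp 2 (Fin.append (fun i => u i) (fun i => v i))

/-- The residual blocks in `Ẽ_{h,σ}`: `(max{x₁,x₂}, min{x₁,x₂}, x₃, Φ'(x₄,…,x_{h+3}))`. -/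
def tildeLayer {h : ℕ} (Φ' : EuclideanSpace ℝ (Fin h) → EuclideanSpace ℝ (Fin h))
    (x : EuclideanSpace ℝ (Fin (h + 3))) : EuclideanSpace ℝ (Fin (h + 3)) :=
  WithLp.toLp 2 fun (j : Fin (h + 3)) =>
    if _h0 : (j : ℕ) = 0 then max (x ⟨0, by omega⟩) (x ⟨1, by omega⟩)
    else if _h1 : (j : ℕ) = 1 then min (x ⟨0, by omega⟩) (x ⟨1, by omega⟩)
    else if _h2 : (j : ℕ) = 2 then x ⟨2, by omega⟩
    else Φ' (WithLp.toLp 2 fun (i : Fin h) => x ⟨(i : ℕ) + 3, by have := i.isLt; omega⟩)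
      ⟨(j : ℕ) - 3, by have := j.isLt; omega⟩

/-- Membership in `Ẽ_{h,σ}` with `σ = ReLU`. -/
def IsTildeLayer {h : ℕ} (Φ : EuclideanSpace ℝ (Fin (h + 3)) → EuclideanSpace ℝ (Fin (h + 3))) :
    Prop :=
  ∃ Φ', IsEulerStep Φ' ∧ ∀ x, Φ x = tildeLayer Φ' x

def emb0 {n : ℕ} : Fin 1 → Fin (n + 3) := fun _ => ⟨0, by omega⟩
def emb1 {n : ℕ} : Fin 1 → Fin (n + 3) := fun _ => ⟨1, by omega⟩
def emb2 {n : ℕ} : Fin 1 → Fin (n + 3) := fun _ => ⟨2, by omega⟩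
def embT {n : ℕ} : Fin n → Fin (n + 3) := fun i => ⟨(i : ℕ) + 3, by have := i.isLt; omega⟩

/-- Membership in `R_{d,m}` for `m = (1,1,1,n)`: each block row of the matrix has spectral
norm at most `1`. -/
def memRm {d n : ℕ} (Q : Matrix (Fin (n + 3)) (Fin d) ℝ) : Prop :=
  specNorm (Q.submatrix emb0 id) ≤ 1 ∧ specNorm (Q.submatrix emb1 id) ≤ 1 ∧
    specNorm (Q.submatrix emb2 id) ≤ 1 ∧ specNorm (Q.submatrix embT id) ≤ 1

def rowBlockSum {n r : ℕ} (A : Matrix (Fin (n + 3)) (Fin (n + 3)) ℝ)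
    (e : Fin r → Fin (n + 3)) : ℝ :=
  specNorm (A.submatrix e emb0) + specNorm (A.submatrix e emb1) +
    specNorm (A.submatrix e emb2) + specNorm (A.submatrix e embT)

/-- Membership in `L_m` for `m = (1,1,1,n)`: for each block row, the sum of the spectral
norms of the blocks is at most `1`. -/
def memLm {n : ℕ} (A : Matrix (Fin (n + 3)) (Fin (n + 3)) ℝ) : Prop :=
  rowBlockSum A emb0 ≤ 1 ∧ rowBlockSum A emb1 ≤ 1 ∧
    rowBlockSum A emb2 ≤ 1 ∧ rowBlockSum A embT ≤ 1

/-- `Φ_{L+1} ∘ A_L ∘ ⋯ ∘ Φ₂ ∘ A₁ ∘ Φ₁`, the alternating composition. -/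
def altChain {α : Type*} : (L : ℕ) → (Fin (L + 1) → α → α) → (Fin L → α → α) → α → α
  | 0, Φ, _, x => Φ 0 x
  | L + 1, Φ, A, x =>
      Φ (Fin.last (L + 1)) (A (Fin.last L)
        (altChain L (fun i => Φ i.castSucc) (fun i => A i.castSucc) x))

/-- Membership in the fixed-width class `tilde-G_{d,σ,n+3}(X,ℝ)` with `σ = ReLU`. -/
def InTildeG {d n : ℕ} (X : Set (EuclideanSpace ℝ (Fin d)))
    (g : EuclideanSpace ℝ (Fin d) → ℝ) : Prop :=
  ∃ (L : ℕ) (Qhat : Matrix (Fin (n + 3)) (Fin d) ℝ) (qhat : EuclideanSpace ℝ (Fin (n + 3)))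
    (Φ : Fin (L + 1) → (EuclideanSpace ℝ (Fin (n + 3)) → EuclideanSpace ℝ (Fin (n + 3))))
    (Ahat : Fin L → Matrix (Fin (n + 3)) (Fin (n + 3)) ℝ)
    (ahat : Fin L → EuclideanSpace ℝ (Fin (n + 3)))
    (v : EuclideanSpace ℝ (Fin (n + 3))),
    memRm Qhat ∧ (∀ ℓ, IsTildeLayer (Φ ℓ)) ∧ (∀ ℓ, memLm (Ahat ℓ)) ∧ (∑ i, |v i|) ≤ 1 ∧
    ∀ x ∈ X,
      g x = ∑ i, v i *
        altChain L Φ (fun ℓ u => matVec (Ahat ℓ) u + ahat ℓ) (matVec Qhat x + qhat) i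

end


noncomputable section Aux

open Finset

def tailE {n : ℕ} (u : EuclideanSpace ℝ (Fin (n + 3))) : EuclideanSpace ℝ (Fin n) :=
  WithLp.toLp 2 (fun i => u (embT i))

def bN {n : ℕ} (u : EuclideanSpace ℝ (Fin (n + 3))) : ℝ :=
  max (max |u (emb0 0)| |u (emb1 0)|) (max |u (emb2 0)| ‖tailE u‖)

lemma matVec_apply {k h : ℕ} (W : Matrix (Fin k) (Fin h) ℝ) (x : EuclideanSpace ℝ (Fin h))
    (j : Fin k) : matVec W x j = ∑ i, W j i * x i := rfl

lemma matVec_norm_le {k h : ℕ} (W : Matrix (Fin k) (Fin h) ℝ) (x : EuclideanSpace ℝ (Fin h)) :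
    ‖matVec W x‖ ≤ specNorm W * ‖x‖ :=
  (LinearMap.toContinuousLinearMap (Matrix.toEuclideanLin W)).le_opNorm x

lemma specNorm_nonneg {k h : ℕ} (W : Matrix (Fin k) (Fin h) ℝ) : 0 ≤ specNorm W :=
  norm_nonneg _

lemma matVec_sub {k h : ℕ} (W : Matrix (Fin k) (Fin h) ℝ) (x y : EuclideanSpace ℝ (Fin h)) :
    matVec W x - matVec W y = matVec W (x - y) :=
  (map_sub (Matrix.toEuclideanLin W) x y).symm

lemma norm_fin1 (x : EuclideanSpace ℝ (Fin 1)) : ‖x‖ = |x 0| := by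
  rw [EuclideanSpace.norm_eq]
  simp [Real.sqrt_sq_eq_abs]

lemma abs_coord_le {k : ℕ} (x : EuclideanSpace ℝ (Fin k)) (i : Fin k) : |x i| ≤ ‖x‖ := by
  rw [EuclideanSpace.norm_eq]
  have h1 : |x i| = Real.sqrt (‖x i‖ ^ 2) := by
    rw [Real.sqrt_sq_eq_abs]; simp
  rw [h1]
  apply Real.sqrt_le_sqrt
  exact Finset.single_le_sum (f := fun j => ‖x j‖ ^ 2) (fun j _ => sq_nonneg _) (mem_univ i)

lemma sum_fin_add3 {n : ℕ} (f : Fin (n + 3) → ℝ) :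
    ∑ j, f j = f (emb0 0) + f (emb1 0) + f (emb2 0) + ∑ k, f (embT k) := by
  have h := Fin.sum_univ_succ (n := n + 2) (fun j : Fin (n + 3) => f j)
  have h1 := Fin.sum_univ_succ (n := n + 1) (fun j : Fin (n + 2) => f j.succ)
  have h2 := Fin.sum_univ_succ (n := n) (fun j : Fin (n + 1) => f j.succ.succ)
  rw [h, h1, h2]
  have e0 : f 0 = f (emb0 0) := by congr 1
  have e1 : f (Fin.succ 0) = f (emb1 0) := by congr 1
  have e2 : f (Fin.succ 0).succ = f (emb2 0) := by congr 1
  have eT : ∀ k : Fin n, f k.succ.succ.succ = f (embT k) := fun k => by congr 1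
  rw [e0, e1, e2]
  simp only [eT]
  ring

lemma bN_nonneg {n : ℕ} (u : EuclideanSpace ℝ (Fin (n + 3))) : 0 ≤ bN u :=
  le_trans (abs_nonneg _) (le_trans (le_max_left _ _) (le_max_left _ _))

lemma abs_emb0_le_bN {n : ℕ} (u : EuclideanSpace ℝ (Fin (n + 3))) : |u (emb0 0)| ≤ bN u :=
  le_trans (le_max_left _ _) (le_max_left _ _)

lemma abs_emb1_le_bN {n : ℕ} (u : EuclideanSpace ℝ (Fin (n + 3))) : |u (emb1 0)| ≤ bN u :=
  le_trans (le_max_right _ _) (le_max_left _ _)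

lemma abs_emb2_le_bN {n : ℕ} (u : EuclideanSpace ℝ (Fin (n + 3))) : |u (emb2 0)| ≤ bN u :=
  le_trans (le_max_left _ _) (le_max_right _ _)

lemma norm_tailE_le_bN {n : ℕ} (u : EuclideanSpace ℝ (Fin (n + 3))) : ‖tailE u‖ ≤ bN u :=
  le_trans (le_max_right _ _) (le_max_right _ _)

lemma abs_apply_le_bN {n : ℕ} (u : EuclideanSpace ℝ (Fin (n + 3))) (i : Fin (n + 3)) :
    |u i| ≤ bN u := by
  by_cases h0 : (i : ℕ) = 0
  · have : i = emb0 0 := Fin.ext h0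
    rw [this]; exact abs_emb0_le_bN u
  by_cases h1 : (i : ℕ) = 1
  · have : i = emb1 0 := Fin.ext h1
    rw [this]; exact abs_emb1_le_bN u
  by_cases h2 : (i : ℕ) = 2
  · have : i = emb2 0 := Fin.ext h2
    rw [this]; exact abs_emb2_le_bN u
  · have h3 : 3 ≤ (i : ℕ) := by omega
    have hlt : (i : ℕ) - 3 < n := by have := i.isLt; omega
    have : i = embT ⟨(i : ℕ) - 3, hlt⟩ := Fin.ext (by simp [embT]; omega)
    rw [this]
    exact le_trans (abs_coord_le (tailE u) ⟨(i : ℕ) - 3, hlt⟩) (norm_tailE_le_bN u)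

def restr {m r : ℕ} (e : Fin r → Fin m) (u : EuclideanSpace ℝ (Fin m)) :
    EuclideanSpace ℝ (Fin r) :=
  WithLp.toLp 2 (fun i => u (e i))

lemma tailE_eq_restr {n : ℕ} (u : EuclideanSpace ℝ (Fin (n + 3))) : tailE u = restr embT u := rfl

lemma matVec_row {n d r : ℕ} (Q : Matrix (Fin (n + 3)) (Fin d) ℝ) (e : Fin r → Fin (n + 3))
    (x : EuclideanSpace ℝ (Fin d)) :
    restr e (matVec Q x) = matVec (Q.submatrix e id) x := rfl

lemma bN_matVec_Q {d n : ℕ} (Q : Matrix (Fin (n + 3)) (Fin d) ℝ) (hQ : memRm Q)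
    (x : EuclideanSpace ℝ (Fin d)) : bN (matVec Q x) ≤ ‖x‖ := by
  obtain ⟨h0, h1, h2, hT⟩ := hQ
  have key : ∀ (e : Fin 1 → Fin (n + 3)), specNorm (Q.submatrix e id) ≤ 1 →
      |matVec Q x (e 0)| ≤ ‖x‖ := by
    intro e he
    show |restr e (matVec Q x) 0| ≤ ‖x‖
    rw [← norm_fin1, matVec_row]
    calc ‖matVec (Q.submatrix e id) x‖ ≤ specNorm (Q.submatrix e id) * ‖x‖ := matVec_norm_le _ _
      _ ≤ 1 * ‖x‖ := mul_le_mul_of_nonneg_right he (norm_nonneg x)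
      _ = ‖x‖ := one_mul _
  have keyT : ‖tailE (matVec Q x)‖ ≤ ‖x‖ := by
    rw [tailE_eq_restr, matVec_row]
    calc ‖matVec (Q.submatrix embT id) x‖ ≤ specNorm (Q.submatrix embT id) * ‖x‖ :=
        matVec_norm_le _ _
      _ ≤ 1 * ‖x‖ := mul_le_mul_of_nonneg_right hT (norm_nonneg x)
      _ = ‖x‖ := one_mul _
  exact max_le (max_le (key _ h0) (key _ h1)) (max_le (key _ h2) keyT)

lemma matVec_block {n r : ℕ} (A : Matrix (Fin (n + 3)) (Fin (n + 3)) ℝ)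
    (e : Fin r → Fin (n + 3)) (u : EuclideanSpace ℝ (Fin (n + 3))) :
    restr e (matVec A u) =
      matVec (A.submatrix e emb0) (restr emb0 u)
      + matVec (A.submatrix e emb1) (restr emb1 u)
      + matVec (A.submatrix e emb2) (restr emb2 u)
      + matVec (A.submatrix e embT) (restr embT u) := by
  ext i
  have hr : (matVec (A.submatrix e emb0) (restr emb0 u)
      + matVec (A.submatrix e emb1) (restr emb1 u)
      + matVec (A.submatrix e emb2) (restr emb2 u)
      + matVec (A.submatrix e embT) (restr embT u)) i
      = (∑ j : Fin 1, A (e i) (emb0 j) * u (emb0 j))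
      + (∑ j : Fin 1, A (e i) (emb1 j) * u (emb1 j))
      + (∑ j : Fin 1, A (e i) (emb2 j) * u (emb2 j))
      + (∑ j : Fin n, A (e i) (embT j) * u (embT j)) := rfl
  rw [hr]
  show (∑ j, A (e i) j * u j) = _
  rw [sum_fin_add3 (fun j => A (e i) j * u j)]
  simp

lemma norm_rowblock {n r : ℕ} (A : Matrix (Fin (n + 3)) (Fin (n + 3)) ℝ)
    (e : Fin r → Fin (n + 3)) (hr : rowBlockSum A e ≤ 1) (u : EuclideanSpace ℝ (Fin (n + 3))) :
    ‖restr e (matVec A u)‖ ≤ bN u := by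
  rw [matVec_block]
  have b0 : ‖matVec (A.submatrix e emb0) (restr emb0 u)‖ ≤
      specNorm (A.submatrix e emb0) * bN u := by
    refine le_trans (matVec_norm_le _ _) (mul_le_mul_of_nonneg_left ?_ (specNorm_nonneg _))
    rw [norm_fin1]; exact abs_emb0_le_bN u
  have b1 : ‖matVec (A.submatrix e emb1) (restr emb1 u)‖ ≤
      specNorm (A.submatrix e emb1) * bN u := by
    refine le_trans (matVec_norm_le _ _) (mul_le_mul_of_nonneg_left ?_ (specNorm_nonneg _))
    rw [norm_fin1]; exact abs_emb1_le_bN u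
  have b2 : ‖matVec (A.submatrix e emb2) (restr emb2 u)‖ ≤
      specNorm (A.submatrix e emb2) * bN u := by
    refine le_trans (matVec_norm_le _ _) (mul_le_mul_of_nonneg_left ?_ (specNorm_nonneg _))
    rw [norm_fin1]; exact abs_emb2_le_bN u
  have bT : ‖matVec (A.submatrix e embT) (restr embT u)‖ ≤
      specNorm (A.submatrix e embT) * bN u := by
    refine le_trans (matVec_norm_le _ _) (mul_le_mul_of_nonneg_left ?_ (specNorm_nonneg _))
    rw [← tailE_eq_restr]; exact norm_tailE_le_bN u
  have tri : ‖matVec (A.submatrix e emb0) (restr emb0 u)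
      + matVec (A.submatrix e emb1) (restr emb1 u)
      + matVec (A.submatrix e emb2) (restr emb2 u)
      + matVec (A.submatrix e embT) (restr embT u)‖ ≤
      ‖matVec (A.submatrix e emb0) (restr emb0 u)‖
      + ‖matVec (A.submatrix e emb1) (restr emb1 u)‖
      + ‖matVec (A.submatrix e emb2) (restr emb2 u)‖
      + ‖matVec (A.submatrix e embT) (restr embT u)‖ := by
    refine le_trans (norm_add_le _ _) ?_
    gcongr
    refine le_trans (norm_add_le _ _) ?_
    gcongr
    exact norm_add_le _ _
  refine le_trans tri ?_
  calc _ ≤ rowBlockSum A e * bN u := by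
        unfold rowBlockSum
        nlinarith [bN_nonneg u, b0, b1, b2, bT]
    _ ≤ 1 * bN u := mul_le_mul_of_nonneg_right hr (bN_nonneg u)
    _ = bN u := one_mul _

lemma bN_matVec_A {n : ℕ} (A : Matrix (Fin (n + 3)) (Fin (n + 3)) ℝ) (hA : memLm A)
    (u : EuclideanSpace ℝ (Fin (n + 3))) : bN (matVec A u) ≤ bN u := by
  obtain ⟨h0, h1, h2, hT⟩ := hA
  have key : ∀ (e : Fin 1 → Fin (n + 3)), rowBlockSum A e ≤ 1 →
      |matVec A u (e 0)| ≤ bN u := by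
    intro e he
    show |restr e (matVec A u) 0| ≤ bN u
    rw [← norm_fin1]
    exact norm_rowblock A e he u
  have keyT : ‖tailE (matVec A u)‖ ≤ bN u := by
    rw [tailE_eq_restr]; exact norm_rowblock A embT hT u
  exact max_le (max_le (key _ h0) (key _ h1)) (max_le (key _ h2) keyT)

open scoped RealInnerProductSpace

lemma relu_key (a b : ℝ) : (relu a - relu b) ^ 2 ≤ (a - b) * (relu a - relu b) := by
  rcases le_total a 0 with ha | ha <;> rcases le_total b 0 with hb | hb <;>
    simp only [relu] <;>
    [rw [max_eq_right ha, max_eq_right hb]; rw [max_eq_right ha, max_eq_left hb];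
     rw [max_eq_left ha, max_eq_right hb]; rw [max_eq_left ha, max_eq_left hb]] <;>
    nlinarith

lemma inner_matVec_transpose {k h : ℕ} (W : Matrix (Fin k) (Fin h) ℝ)
    (s : EuclideanSpace ℝ (Fin k)) (x : EuclideanSpace ℝ (Fin h)) :
    ⟪matVec W.transpose s, x⟫ = ⟪s, matVec W x⟫ := by
  simp only [PiLp.inner_apply, RCLike.inner_apply, conj_trivial, matVec_apply,
    Matrix.transpose_apply]
  simp_rw [Finset.sum_mul, Finset.mul_sum]
  rw [Finset.sum_comm]
  refine Finset.sum_congr rfl fun i _ => Finset.sum_congr rfl fun j _ => by ring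

lemma matVec_transpose_norm_le {k h : ℕ} (W : Matrix (Fin k) (Fin h) ℝ) (hW : specNorm W ≤ 1)
    (s : EuclideanSpace ℝ (Fin k)) : ‖matVec W.transpose s‖ ≤ ‖s‖ := by
  have h1 : ‖matVec W.transpose s‖ ^ 2 =
      ⟪matVec W.transpose s, matVec W.transpose s⟫ :=
    (real_inner_self_eq_norm_sq _).symm
  rw [inner_matVec_transpose] at h1
  have h2 : ⟪s, matVec W (matVec W.transpose s)⟫ ≤
      ‖s‖ * ‖matVec W (matVec W.transpose s)‖ := real_inner_le_norm _ _
  have h3 : ‖matVec W (matVec W.transpose s)‖ ≤ 1 * ‖matVec W.transpose s‖ :=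
    le_trans (matVec_norm_le _ _) (mul_le_mul_of_nonneg_right hW (norm_nonneg _))
  have h4 : ‖matVec W.transpose s‖ ^ 2 ≤ ‖s‖ * ‖matVec W.transpose s‖ := by
    rw [h1]
    refine le_trans h2 ?_
    rw [one_mul] at h3
    exact mul_le_mul_of_nonneg_left h3 (norm_nonneg s)
  nlinarith [norm_nonneg (matVec W.transpose s), norm_nonneg s]

lemma inner_relu_ge {k : ℕ} (u w : EuclideanSpace ℝ (Fin k)) :
    ‖entrywise relu u - entrywise relu w‖ ^ 2 ≤
      ⟪u - w, entrywise relu u - entrywise relu w⟫ := by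
  rw [← real_inner_self_eq_norm_sq]
  simp only [PiLp.inner_apply, RCLike.inner_apply, conj_trivial]
  refine Finset.sum_le_sum fun i _ => ?_
  have h1 : (entrywise relu u - entrywise relu w) i = relu (u i) - relu (w i) := rfl
  have h2 : (u - w) i = u i - w i := rfl
  rw [h1, h2]
  have := relu_key (u i) (w i)
  nlinarith

lemma eulerStep_lipschitz {k : ℕ} (Φ : EuclideanSpace ℝ (Fin k) → EuclideanSpace ℝ (Fin k))
    (hΦ : IsEulerStep Φ) (y z : EuclideanSpace ℝ (Fin k)) : ‖Φ y - Φ z‖ ≤ ‖y - z‖ := by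
  obtain ⟨m, W, b, τ, hτ0, hτ2, hW, hform⟩ := hΦ
  set s : EuclideanSpace ℝ (Fin m) :=
    entrywise relu (matVec W y + b) - entrywise relu (matVec W z + b) with hs
  have hDef : Φ y - Φ z = (y - z) - τ • matVec W.transpose s := by
    rw [hform y, hform z, hs, ← matVec_sub]
    module
  have hWδ : matVec W (y - z) = (matVec W y + b) - (matVec W z + b) := by
    rw [← matVec_sub]; abel
  have hinner : ‖s‖ ^ 2 ≤ ⟪y - z, matVec W.transpose s⟫ := by
    rw [real_inner_comm, inner_matVec_transpose, hWδ, real_inner_comm]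
    exact inner_relu_ge _ _
  have hnorm : ‖matVec W.transpose s‖ ≤ ‖s‖ := matVec_transpose_norm_le W hW s
  have expand : ‖Φ y - Φ z‖ ^ 2 = ‖y - z‖ ^ 2
      - 2 * (τ * ⟪y - z, matVec W.transpose s⟫)
      + τ ^ 2 * ‖matVec W.transpose s‖ ^ 2 := by
    rw [hDef, norm_sub_sq_real, real_inner_smul_right, norm_smul, Real.norm_eq_abs, mul_pow,
      sq_abs]
  have ht2 : ‖matVec W.transpose s‖ ^ 2 ≤ ‖s‖ ^ 2 := by
    nlinarith [norm_nonneg (matVec W.transpose s), norm_nonneg s]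
  have h2 : ‖Φ y - Φ z‖ ^ 2 ≤ ‖y - z‖ ^ 2 := by
    rw [expand]
    nlinarith [mul_le_mul_of_nonneg_left ht2 (sq_nonneg τ),
      mul_le_mul_of_nonneg_left hinner hτ0,
      mul_nonneg hτ0 (sq_nonneg ‖s‖), sq_nonneg ‖s‖, hτ0, hτ2]
  calc ‖Φ y - Φ z‖ = Real.sqrt (‖Φ y - Φ z‖ ^ 2) := (Real.sqrt_sq (norm_nonneg _)).symm
    _ ≤ Real.sqrt (‖y - z‖ ^ 2) := Real.sqrt_le_sqrt h2
    _ = ‖y - z‖ := Real.sqrt_sq (norm_nonneg _)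

lemma tilde_contract {n : ℕ} (Φ : EuclideanSpace ℝ (Fin (n + 3)) → EuclideanSpace ℝ (Fin (n + 3)))
    (hΦ : IsTildeLayer Φ) (x y : EuclideanSpace ℝ (Fin (n + 3))) :
    bN (Φ x - Φ y) ≤ bN (x - y) := by
  obtain ⟨Φ', hE, hform⟩ := hΦ
  have v0 : ∀ u : EuclideanSpace ℝ (Fin (n + 3)),
      tildeLayer Φ' u (emb0 0) = max (u (emb0 0)) (u (emb1 0)) := fun u => by
    simp [tildeLayer, emb0, emb1]
  have v1 : ∀ u : EuclideanSpace ℝ (Fin (n + 3)),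
      tildeLayer Φ' u (emb1 0) = min (u (emb0 0)) (u (emb1 0)) := fun u => by
    simp [tildeLayer, emb0, emb1]
  have v2 : ∀ u : EuclideanSpace ℝ (Fin (n + 3)),
      tildeLayer Φ' u (emb2 0) = u (emb2 0) := fun u => by
    simp [tildeLayer, emb2]
  have vT : ∀ u : EuclideanSpace ℝ (Fin (n + 3)),
      tailE (tildeLayer Φ' u) = Φ' (tailE u) := fun u => by
    refine PiLp.ext fun i => ?_
    show tildeLayer Φ' u (embT i) = Φ' (tailE u) i
    unfold tildeLayer
    rw [PiLp.toLp_apply (p := 2)]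
    rw [dif_neg (by simp only [embT]; omega), dif_neg (by simp only [embT]; omega),
      dif_neg (by simp only [embT]; omega)]
    rfl
  have d0 : (Φ x - Φ y) (emb0 0)
      = max (x (emb0 0)) (x (emb1 0)) - max (y (emb0 0)) (y (emb1 0)) := by
    show Φ x (emb0 0) - Φ y (emb0 0) = _
    rw [hform, hform, v0, v0]
  have d1 : (Φ x - Φ y) (emb1 0)
      = min (x (emb0 0)) (x (emb1 0)) - min (y (emb0 0)) (y (emb1 0)) := by
    show Φ x (emb1 0) - Φ y (emb1 0) = _
    rw [hform, hform, v1, v1]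
  have d2 : (Φ x - Φ y) (emb2 0) = x (emb2 0) - y (emb2 0) := by
    show Φ x (emb2 0) - Φ y (emb2 0) = _
    rw [hform, hform, v2, v2]
  have dT : tailE (Φ x - Φ y) = Φ' (tailE x) - Φ' (tailE y) := by
    show tailE (Φ x) - tailE (Φ y) = _
    rw [hform, hform, vT, vT]
  refine max_le (max_le ?_ ?_) (max_le ?_ ?_)
  · rw [d0]
    refine le_trans (abs_max_sub_max_le_max _ _ _ _) (max_le ?_ ?_)
    · exact abs_emb0_le_bN (x - y)
    · exact abs_emb1_le_bN (x - y)
  · rw [d1]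
    refine le_trans (abs_min_sub_min_le_max _ _ _ _) (max_le ?_ ?_)
    · exact abs_emb0_le_bN (x - y)
    · exact abs_emb1_le_bN (x - y)
  · rw [d2]
    exact abs_emb2_le_bN (x - y)
  · rw [dT]
    refine le_trans (eulerStep_lipschitz Φ' hE _ _) ?_
    exact norm_tailE_le_bN (x - y)

lemma chain_contract {n : ℕ} (L : ℕ) :
    ∀ (Φ : Fin (L + 1) → (EuclideanSpace ℝ (Fin (n + 3)) → EuclideanSpace ℝ (Fin (n + 3)))),
    (∀ ℓ, IsTildeLayer (Φ ℓ)) →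
    ∀ (Ahat : Fin L → Matrix (Fin (n + 3)) (Fin (n + 3)) ℝ)
      (ahat : Fin L → EuclideanSpace ℝ (Fin (n + 3))),
    (∀ ℓ, memLm (Ahat ℓ)) →
    ∀ (u u' : EuclideanSpace ℝ (Fin (n + 3))),
    bN (altChain L Φ (fun ℓ w => matVec (Ahat ℓ) w + ahat ℓ) u
      - altChain L Φ (fun ℓ w => matVec (Ahat ℓ) w + ahat ℓ) u') ≤ bN (u - u') := by
  induction L with
  | zero =>
    intro Φ hΦ _ _ _ u u'
    exact tilde_contract _ (hΦ 0) u u'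
  | succ L ih =>
    intro Φ hΦ Ahat ahat hA u u'
    simp only [altChain]
    refine le_trans (tilde_contract _ (hΦ (Fin.last (L + 1))) _ _) ?_
    have hsub : (matVec (Ahat (Fin.last L))
          (altChain L (fun i => Φ i.castSucc)
            (fun i => (fun ℓ w => matVec (Ahat ℓ) w + ahat ℓ) i.castSucc) u)
        + ahat (Fin.last L))
        - (matVec (Ahat (Fin.last L))
          (altChain L (fun i => Φ i.castSucc)
            (fun i => (fun ℓ w => matVec (Ahat ℓ) w + ahat ℓ) i.castSucc) u')
        + ahat (Fin.last L))
        = matVec (Ahat (Fin.last L))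
          (altChain L (fun i => Φ i.castSucc)
            (fun i => (fun ℓ w => matVec (Ahat ℓ) w + ahat ℓ) i.castSucc) u
          - altChain L (fun i => Φ i.castSucc)
            (fun i => (fun ℓ w => matVec (Ahat ℓ) w + ahat ℓ) i.castSucc) u') := by
      rw [add_sub_add_right_eq_sub, matVec_sub]
    rw [hsub]
    refine le_trans (bN_matVec_A _ (hA (Fin.last L)) _) ?_
    exact ih (fun i => Φ i.castSucc) (fun i => hΦ _) (fun i => Ahat i.castSucc)
      (fun i => ahat i.castSucc) (fun i => hA _) u u'

end Aux

/-- Every function in the fixed-width class `tilde-G_{d,ReLU,h}(ℝ^d,ℝ)`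
(with width `h = n + 3 ≥ 3` and `m = (1,1,1,n)`) is `1`-Lipschitz. -/
theorem stmt12 (d n L : ℕ)
    (Qhat : Matrix (Fin (n + 3)) (Fin d) ℝ) (qhat : EuclideanSpace ℝ (Fin (n + 3)))
    (hQ : memRm Qhat)
    (Φ : Fin (L + 1) → (EuclideanSpace ℝ (Fin (n + 3)) → EuclideanSpace ℝ (Fin (n + 3))))
    (hΦ : ∀ ℓ, IsTildeLayer (Φ ℓ))
    (Ahat : Fin L → Matrix (Fin (n + 3)) (Fin (n + 3)) ℝ)
    (ahat : Fin L → EuclideanSpace ℝ (Fin (n + 3)))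
    (hA : ∀ ℓ, memLm (Ahat ℓ))
    (v : EuclideanSpace ℝ (Fin (n + 3))) (hv : (∑ i, |v i|) ≤ 1) :
    LipschitzWith 1 (fun x : EuclideanSpace ℝ (Fin d) =>
      ∑ i, v i *
        altChain L Φ (fun ℓ u => matVec (Ahat ℓ) u + ahat ℓ) (matVec Qhat x + qhat) i) := by
  have main : ∀ x y : EuclideanSpace ℝ (Fin d),
      bN (altChain L Φ (fun ℓ u => matVec (Ahat ℓ) u + ahat ℓ) (matVec Qhat x + qhat)
        - altChain L Φ (fun ℓ u => matVec (Ahat ℓ) u + ahat ℓ) (matVec Qhat y + qhat))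
        ≤ ‖x - y‖ := by
    intro x y
    refine le_trans (chain_contract L Φ hΦ Ahat ahat hA _ _) ?_
    rw [add_sub_add_right_eq_sub, matVec_sub]
    exact bN_matVec_Q Qhat hQ (x - y)
  refine LipschitzWith.of_dist_le_mul fun x y => ?_
  rw [Real.dist_eq, NNReal.coe_one, one_mul, dist_eq_norm]
  set Gx := altChain L Φ (fun ℓ u => matVec (Ahat ℓ) u + ahat ℓ) (matVec Qhat x + qhat) with hGx
  set Gy := altChain L Φ (fun ℓ u => matVec (Ahat ℓ) u + ahat ℓ) (matVec Qhat y + qhat) with hGy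
  calc |(∑ i, v i * Gx i) - ∑ i, v i * Gy i| = |∑ i, v i * (Gx i - Gy i)| := by
        rw [← Finset.sum_sub_distrib]
        congr 1
        exact Finset.sum_congr rfl fun i _ => by ring
    _ ≤ ∑ i, |v i * (Gx i - Gy i)| := Finset.abs_sum_le_sum_abs _ _
    _ ≤ ∑ i, |v i| * bN (Gx - Gy) := by
        refine Finset.sum_le_sum fun i _ => ?_
        rw [abs_mul]
        exact mul_le_mul_of_nonneg_left (abs_apply_le_bN (Gx - Gy) i) (abs_nonneg _)
    _ = (∑ i, |v i|) * bN (Gx - Gy) := (Finset.sum_mul _ _ _).symm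
    _ ≤ 1 * ‖x - y‖ :=
        mul_le_mul hv (main x y) (bN_nonneg _) zero_le_one
    _ = ‖x - y‖ := one_mul _
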